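/- Let o_m be the quotient of a complete discrete valuation ring by the m-th power of its maximal ideal, with residue field of even characteristic. For any unit u ∈ o_m^× and any v ∈ o_m, every element of the maximal ideal π·o_m lies in the image set { u·y + v·y² : y ∈ o_m }. -/

import Mathlib

/-- in `o_m = O/(π^m)` with residue field of even characteristic,
for any unit `u` and any `v`, every element of `π·o_m` is of the form `u·y + v·y²`. -/
theorem stmt_1 {O : Type*} [CommRing O] [IsDomain O] [IsDiscreteValuationRing O]
    (π : O) (hπ : Irreducible π)
    [IsAdicComplete (Ideal.span {π}) O] [Finite (O ⧸ Ideal.span {π})]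
    (hres2 : π ∣ 2)
    (m : ℕ) (hm : 1 ≤ m)
    (u : (O ⧸ Ideal.span {π ^ m})ˣ) (v : O ⧸ Ideal.span {π ^ m})
    (z : O) :
    ∃ y : O ⧸ Ideal.span {π ^ m},
      (u : O ⧸ Ideal.span {π ^ m}) * y + v * y ^ 2 =
        Ideal.Quotient.mk (Ideal.span {π ^ m}) (π * z) := by
  obtain ⟨u₀, hu₀⟩ := Ideal.Quotient.mk_surjective (u : O ⧸ Ideal.span {π ^ m})
  obtain ⟨v₀, hv₀⟩ := Ideal.Quotient.mk_surjective v
  obtain ⟨w, hw⟩ := hres2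
  -- nontrivial quotient
  have hne : Ideal.span {π ^ m} ≠ ⊤ := by
    intro h
    exact hπ.not_isUnit ((isUnit_pow_iff (by omega : m ≠ 0)).mp (Ideal.span_singleton_eq_top.mp h))
  haveI : Nontrivial (O ⧸ Ideal.span {π ^ m}) := Ideal.Quotient.nontrivial_iff.mpr hne
  have hu₀unit : IsUnit u₀ := by
    by_contra h
    have hmem : u₀ ∈ Ideal.span {π} := by
      rw [← hπ.maximalIdeal_eq]
      exact h
    obtain ⟨t, ht⟩ := Ideal.mem_span_singleton.mp hmem
    have hun : IsUnit (Ideal.Quotient.mk (Ideal.span {π ^ m}) u₀) := hu₀ ▸ u.isUnit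
    rw [ht, map_mul] at hun
    have hπun : IsUnit ((Ideal.Quotient.mk (Ideal.span {π ^ m})) π) := isUnit_of_mul_isUnit_left hun
    have : ((Ideal.Quotient.mk (Ideal.span {π ^ m})) π) ^ m = 0 := by
      rw [← map_pow, Ideal.Quotient.eq_zero_iff_mem]
      exact Ideal.mem_span_singleton_self _
    exact not_isUnit_zero (this ▸ hπun.pow m)
  obtain ⟨s, hs⟩ := hu₀unit.exists_right_inv
  have key : ∀ k, 1 ≤ k → ∃ y : O, π ^ k ∣ (u₀ * y + v₀ * y ^ 2 - π * z) := by
    intro k hk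
    induction k, hk using Nat.le_induction with
    | base =>
      refine ⟨0, ?_⟩
      rw [pow_one]
      ring_nf
      exact (dvd_mul_right π z).neg_right
    | succ k hk ih =>
      obtain ⟨y, c, hc⟩ := ih
      obtain ⟨j, rfl⟩ := Nat.exists_eq_add_of_le hk
      refine ⟨y + π ^ (1 + j) * (-(s * c)), -(w * v₀ * y * s * c) + π ^ j * v₀ * s ^ 2 * c ^ 2, ?_⟩
      have : u₀ * (y + π ^ (1 + j) * (-(s * c))) + v₀ * (y + π ^ (1 + j) * (-(s * c))) ^ 2 - π * z
          = π ^ (1 + j + 1) * (-(w * v₀ * y * s * c) + π ^ j * v₀ * s ^ 2 * c ^ 2) := by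
        have h2k : π ^ (1 + j) * π ^ (1 + j) = π ^ (1 + j + 1) * π ^ j := by
          rw [← pow_add, ← pow_add]; ring_nf
        linear_combination hc - (π ^ (1 + j) * c) * hs - (v₀ * y * π ^ (1 + j) * s * c) * hw + v₀ * (s*c)^2 * h2k
      rw [this]
  obtain ⟨y, hy⟩ := key m hm
  refine ⟨Ideal.Quotient.mk _ y, ?_⟩
  rw [← hu₀, ← hv₀, ← map_pow, ← map_mul, ← map_mul, ← map_add, Ideal.Quotient.eq]
  exact Ideal.mem_span_singleton.mpr hy
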